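/- Let L be a symmetric positive semidefinite d×d real matrix and let S be a proper sampling on {1,…,d} with probability matrix P and marginals p. Over all vectors v ∈ ℝ^d with positive entries satisfying the ESO inequality P ∘ L ⪯ Diag(p ∘ v) (where (p ∘ v)_j = p_j v_j and ⪯ is the Loewner order), the minimum of max_{1≤j≤d} v_j/p_j equals λmax(P̄ ∘ L); moreover the vector v with v_j = λmax(P̄ ∘ L)·p_j satisfies the ESO inequality and attains this minimum (assuming L ≠ 0 so that λmax(P̄ ∘ L) > 0). -/

import Mathlib

open scoped BigOperators RealInnerProductSpace
open Matrix

noncomputable section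

/-- A proper sampling on `{1,…,d}`: a finitely supported probability distribution over
subsets of `Fin d` whose marginal probabilities are all positive. -/
structure Sampling (d : ℕ) where
  prob : Finset (Fin d) → ℝ
  nonneg : ∀ S, 0 ≤ prob S
  total : ∑ S : Finset (Fin d), prob S = 1
  margPos : ∀ j : Fin d, 0 < ∑ S : Finset (Fin d), if j ∈ S then prob S else 0

namespace Sampling

variable {d : ℕ} (μ : Sampling d)

/-- Marginal probability `p_j = Prob(j ∈ S)`. -/
def marg (j : Fin d) : ℝ := ∑ S : Finset (Fin d), if j ∈ S then μ.prob S else 0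

/-- Probability matrix `P`, with entries `p_{jl} = Prob({j,l} ⊆ S)`. -/
def probMatrix : Matrix (Fin d) (Fin d) ℝ :=
  Matrix.of fun j l => ∑ S : Finset (Fin d), if j ∈ S ∧ l ∈ S then μ.prob S else 0

/-- The matrix `P̄` with entries `p_{jl}/(p_j p_l)`. -/
def Pbar : Matrix (Fin d) (Fin d) ℝ :=
  Matrix.of fun j l => μ.probMatrix j l / (μ.marg j * μ.marg l)

/-- The matrix `P̃ = P̄ − E` where `E` is the all-ones matrix. -/
def Ptilde : Matrix (Fin d) (Fin d) ℝ := μ.Pbar - Matrix.of fun _ _ => (1 : ℝ)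

/-- The unbiased diagonal sketch `C` associated with a realization `S` of the sampling. -/
def sketch (S : Finset (Fin d)) : Matrix (Fin d) (Fin d) ℝ :=
  Matrix.diagonal fun j => if j ∈ S then (μ.marg j)⁻¹ else 0

end Sampling

/-- Largest eigenvalue of a symmetric matrix, via the Rayleigh quotient. -/
def lambdaMax {d : ℕ} (M : Matrix (Fin d) (Fin d) ℝ) : ℝ :=
  sSup {r : ℝ | ∃ v : Fin d → ℝ, v ⬝ᵥ v = 1 ∧ r = v ⬝ᵥ M.mulVec v}

/-- Smallest eigenvalue of a symmetric matrix, via the Rayleigh quotient. -/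
def lambdaMin {d : ℕ} (M : Matrix (Fin d) (Fin d) ℝ) : ℝ :=
  sInf {r : ℝ | ∃ v : Fin d → ℝ, v ⬝ᵥ v = 1 ∧ r = v ⬝ᵥ M.mulVec v}

/-- `Mdag` is the Moore–Penrose pseudoinverse of `M`. -/
def IsMoorePenrose {m n : Type*} [Fintype m] [Fintype n]
    (M : Matrix m n ℝ) (Mdag : Matrix n m ℝ) : Prop :=
  M * Mdag * M = M ∧ Mdag * M * Mdag = Mdag ∧
    (M * Mdag)ᵀ = M * Mdag ∧ (Mdag * M)ᵀ = Mdag * M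

/-- Vectors in `ℝ^d` with the Euclidean inner product. -/
abbrev Vec (d : ℕ) := EuclideanSpace ℝ (Fin d)

/-- Action of a matrix on a Euclidean vector. -/
def mact {d e : ℕ} (M : Matrix (Fin e) (Fin d) ℝ) (x : Vec d) : Vec e :=
  Matrix.toEuclideanLin M x

/-- Quadratic form `xᵀ M x`, i.e. the squared `M`-seminorm `‖x‖²_M`. -/
def quad {d : ℕ} (M : Matrix (Fin d) (Fin d) ℝ) (x : Vec d) : ℝ := ⟪x, mact M x⟫

/-- `f` is `M`-smooth: `f x ≤ f y + ⟨∇f(y), x−y⟩ + ½ (x−y)ᵀ M (x−y)` for all `x, y`. -/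
def MSmooth {d : ℕ} (f : Vec d → ℝ) (M : Matrix (Fin d) (Fin d) ℝ) : Prop :=
  ∀ x y : Vec d, f x ≤ f y + ⟪gradient f y, x - y⟫ + (1 / 2) * quad M (x - y)

/-- Random iterates driven by i.i.d. draws: `traj x0 step k ω` is the `k`-th iterate along
the sample path `ω` of `k` draws. -/
def traj {V Ω : Type*} (x0 : V) (step : V → Ω → V) : ∀ k : ℕ, (Fin k → Ω) → V
  | 0, _ => x0
  | k + 1, ω => step (traj x0 step k fun i => ω i.castSucc) (ω (Fin.last k))

/-- Expectation `E[φ(x^k)]` of a functional of the `k`-th iterate, over `k` i.i.d. draws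
with one-step distribution `P`. -/
def trajExp {V Ω : Type*} [Fintype Ω] (P : Ω → ℝ) (x0 : V) (step : V → Ω → V)
    (φ : V → ℝ) (k : ℕ) : ℝ :=
  ∑ ω : Fin k → Ω, (∏ i, P (ω i)) * φ (traj x0 step k ω)


section MyAux
variable {d : ℕ}

lemma myRayleigh_bddAbove (M : Matrix (Fin d) (Fin d) ℝ) :
    BddAbove {r : ℝ | ∃ v : Fin d → ℝ, v ⬝ᵥ v = 1 ∧ r = v ⬝ᵥ M.mulVec v} := by
  refine ⟨∑ j, ∑ l, |M j l|, ?_⟩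
  rintro r ⟨v, hv, rfl⟩
  have hsum : ∑ i, v i * v i = 1 := hv
  have habs : ∀ j, |v j| ≤ 1 := by
    intro j
    have h2 : v j * v j ≤ ∑ i, v i * v i :=
      Finset.single_le_sum (f := fun i => v i * v i) (fun i _ => mul_self_nonneg _)
        (Finset.mem_univ j)
    nlinarith [abs_nonneg (v j), abs_mul_abs_self (v j)]
  have hexp : v ⬝ᵥ M.mulVec v = ∑ j, ∑ l, v j * (M j l * v l) := by
    simp [dotProduct, Matrix.mulVec, Finset.mul_sum]
  rw [hexp]
  refine Finset.sum_le_sum fun j _ => Finset.sum_le_sum fun l _ => ?_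
  calc v j * (M j l * v l) ≤ |v j * (M j l * v l)| := le_abs_self _
    _ = |v j| * |M j l| * |v l| := by rw [abs_mul, abs_mul]; ring
    _ ≤ 1 * |M j l| * 1 := by
        have h1 := habs j; have h2 := habs l
        have h3 : |v j| * |M j l| ≤ 1 * |M j l| :=
          mul_le_mul_of_nonneg_right h1 (abs_nonneg _)
        exact mul_le_mul h3 h2 (abs_nonneg _) (by positivity)
    _ = |M j l| := by ring

lemma myLe_lambdaMax (M : Matrix (Fin d) (Fin d) ℝ) {v : Fin d → ℝ} (hv : v ⬝ᵥ v = 1) :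
    v ⬝ᵥ M.mulVec v ≤ lambdaMax M :=
  le_csSup (myRayleigh_bddAbove M) ⟨v, hv, rfl⟩

lemma mySingle_unit (j : Fin d) : (Pi.single j 1 : Fin d → ℝ) ⬝ᵥ (Pi.single j 1) = 1 := by
  simp [dotProduct_single, Pi.single_apply]

lemma mySingle_quad (M : Matrix (Fin d) (Fin d) ℝ) (a b : Fin d) :
    (Pi.single a 1 : Fin d → ℝ) ⬝ᵥ M.mulVec (Pi.single b 1) = M a b := by
  simp [Matrix.mulVec_single, dotProduct, Pi.single_apply]

lemma myLambdaMax_le (hd : 0 < d) (M : Matrix (Fin d) (Fin d) ℝ) {c : ℝ}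
    (h : ∀ v : Fin d → ℝ, v ⬝ᵥ v = 1 → v ⬝ᵥ M.mulVec v ≤ c) : lambdaMax M ≤ c := by
  apply csSup_le
  · exact ⟨_, ⟨Pi.single ⟨0, hd⟩ 1, mySingle_unit _, rfl⟩⟩
  · rintro r ⟨v, hv, rfl⟩; exact h v hv

lemma myQuad_le_lambdaMax (M : Matrix (Fin d) (Fin d) ℝ) (y : Fin d → ℝ) :
    y ⬝ᵥ M.mulVec y ≤ lambdaMax M * (y ⬝ᵥ y) := by
  rcases eq_or_ne y 0 with rfl | hy
  · simp
  · have hyy : 0 < y ⬝ᵥ y := by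
      obtain ⟨i, hi⟩ := Function.ne_iff.mp hy
      exact Finset.sum_pos' (fun i _ => mul_self_nonneg _)
        ⟨i, Finset.mem_univ i, mul_self_pos.mpr hi⟩
    set n := Real.sqrt (y ⬝ᵥ y) with hn
    have hn0 : 0 < n := Real.sqrt_pos.mpr hyy
    have hnn : n * n = y ⬝ᵥ y := Real.mul_self_sqrt hyy.le
    have hu : (n⁻¹ • y) ⬝ᵥ (n⁻¹ • y) = 1 := by
      rw [smul_dotProduct, dotProduct_smul, smul_eq_mul, smul_eq_mul, ← hnn]
      field_simp
    have hq : (n⁻¹ • y) ⬝ᵥ M.mulVec (n⁻¹ • y) = n⁻¹ * (n⁻¹ * (y ⬝ᵥ M.mulVec y)) := by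
      rw [Matrix.mulVec_smul, smul_dotProduct, dotProduct_smul,
        smul_eq_mul, smul_eq_mul]
    have h := myLe_lambdaMax M hu
    rw [hq] at h
    calc y ⬝ᵥ M.mulVec y = (n * n) * (n⁻¹ * (n⁻¹ * (y ⬝ᵥ M.mulVec y))) := by
          field_simp
      _ ≤ (n * n) * lambdaMax M := by
          exact mul_le_mul_of_nonneg_left h (by positivity)
      _ = lambdaMax M * (y ⬝ᵥ y) := by rw [hnn]; ring

lemma mySampling_marg_pos (μ : Sampling d) (j : Fin d) : 0 < μ.marg j := μ.margPos j

lemma mySampling_probMatrix_diag (μ : Sampling d) (j : Fin d) :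
    μ.probMatrix j j = μ.marg j := by
  simp [Sampling.probMatrix, Sampling.marg]

lemma mySampling_probMatrix_symm (μ : Sampling d) (j l : Fin d) :
    μ.probMatrix j l = μ.probMatrix l j := by
  simp only [Sampling.probMatrix, Matrix.of_apply]
  exact Finset.sum_congr rfl fun S _ =>
    if_congr ⟨fun h => ⟨h.2, h.1⟩, fun h => ⟨h.2, h.1⟩⟩ rfl rfl

lemma myDot_had (μ : Sampling d) (L : Matrix (Fin d) (Fin d) ℝ) (x : Fin d → ℝ) :
    x ⬝ᵥ (Matrix.hadamard μ.probMatrix L).mulVec x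
      = (fun j => μ.marg j * x j) ⬝ᵥ
          (Matrix.hadamard μ.Pbar L).mulVec (fun j => μ.marg j * x j) := by
  simp only [dotProduct, Matrix.mulVec, Matrix.hadamard_apply, Finset.mul_sum,
    Sampling.Pbar, Matrix.of_apply]
  refine Finset.sum_congr rfl fun j _ => Finset.sum_congr rfl fun l _ => ?_
  have hj := (mySampling_marg_pos μ j).ne'
  have hl := (mySampling_marg_pos μ l).ne'
  field_simp

end MyAux

/-- over all positive vectors `v` satisfying the ESO inequality
`P ∘ L ⪯ Diag(p ∘ v)`, the minimum of `max_j v_j/p_j` equals `λmax(P̄ ∘ L)`;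
the vector `v_j = λmax(P̄ ∘ L)·p_j` is feasible and attains it (with `L ≠ 0`,
so `λmax(P̄ ∘ L) > 0`, making this `v` positive). -/
theorem statement4 {d : ℕ} (hd : 0 < d) (μ : Sampling d)
    (L : Matrix (Fin d) (Fin d) ℝ) (hL : L.PosSemidef) (hL0 : L ≠ 0) :
    0 < lambdaMax (Matrix.hadamard μ.Pbar L) ∧
    (Matrix.diagonal (fun j => μ.marg j * (lambdaMax (Matrix.hadamard μ.Pbar L) * μ.marg j))
        - Matrix.hadamard μ.probMatrix L).PosSemidef ∧
    (⨆ j : Fin d, lambdaMax (Matrix.hadamard μ.Pbar L) * μ.marg j / μ.marg j)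
      = lambdaMax (Matrix.hadamard μ.Pbar L) ∧
    ∀ v : Fin d → ℝ, (∀ j, 0 < v j) →
      (Matrix.diagonal (fun j => μ.marg j * v j) - Matrix.hadamard μ.probMatrix L).PosSemidef →
      lambdaMax (Matrix.hadamard μ.Pbar L) ≤ ⨆ j : Fin d, v j / μ.marg j := by
  haveI : Nonempty (Fin d) := ⟨⟨0, hd⟩⟩
  set lam := lambdaMax (Matrix.hadamard μ.Pbar L) with hlam
  have hLsymm : ∀ i j, L i j = L j i := fun i j => by
    have := congrFun (congrFun hL.1.eq i) j
    simpa [Matrix.conjTranspose_apply] using this.symm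
  have hst : ∀ x : Fin d → ℝ, star x = x := fun x => funext fun i => by simp
  -- Part 1 : lam > 0
  have hdiag : ∃ j, 0 < L j j := by
    by_contra h
    push_neg at h
    have hge : ∀ j, 0 ≤ L j j := fun j => by
      have := (Matrix.posSemidef_iff_dotProduct_mulVec.mp hL).2 (Pi.single j 1)
      rwa [hst, mySingle_quad] at this
    have hdg : ∀ j, L j j = 0 := fun j => le_antisymm (h j) (hge j)
    apply hL0
    ext i j
    rcases eq_or_ne i j with rfl | hij
    · simp [hdg i]
    · have e1 := (Matrix.posSemidef_iff_dotProduct_mulVec.mp hL).2 (Pi.single i 1 + Pi.single j 1)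
      have e2 := (Matrix.posSemidef_iff_dotProduct_mulVec.mp hL).2 (Pi.single i 1 - Pi.single j 1)
      rw [hst, Matrix.mulVec_add, dotProduct_add, add_dotProduct,
        add_dotProduct, mySingle_quad, mySingle_quad, mySingle_quad,
        mySingle_quad] at e1
      rw [hst, Matrix.mulVec_sub, dotProduct_sub, sub_dotProduct,
        sub_dotProduct, mySingle_quad, mySingle_quad, mySingle_quad,
        mySingle_quad] at e2
      have hij' := hLsymm i j
      have h1 := hdg i; have h2 := hdg j
      simp only [Matrix.zero_apply]
      linarith
  obtain ⟨j₀, hj₀⟩ := hdiag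
  have hm0 := mySampling_marg_pos μ j₀
  have hPbarjj : μ.Pbar j₀ j₀ = (μ.marg j₀)⁻¹ := by
    simp only [Sampling.Pbar, Matrix.of_apply, mySampling_probMatrix_diag]
    rw [div_eq_iff (by positivity)]
    field_simp
  have hpos : 0 < lam := by
    have h1 := myLe_lambdaMax (Matrix.hadamard μ.Pbar L) (mySingle_unit j₀)
    rw [mySingle_quad, Matrix.hadamard_apply, hPbarjj] at h1
    calc (0:ℝ) < (μ.marg j₀)⁻¹ * L j₀ j₀ := by positivity
      _ ≤ lam := h1
  refine ⟨hpos, ?_, ?_, ?_⟩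
  -- Part 2 : feasibility of v = lam • p
  · refine Matrix.posSemidef_iff_dotProduct_mulVec.mpr ⟨?_, ?_⟩
    · have hPL : (Matrix.hadamard μ.probMatrix L).IsHermitian := by
        ext i j
        simp only [Matrix.conjTranspose_apply, Matrix.hadamard_apply, star_trivial]
        rw [hLsymm j i, mySampling_probMatrix_symm μ j i]
      exact (Matrix.isHermitian_diagonal _).sub hPL
    · intro x
      rw [hst, Matrix.sub_mulVec, dotProduct_sub, sub_nonneg]
      have hdd : x ⬝ᵥ (Matrix.diagonal
          (fun j => μ.marg j * (lam * μ.marg j))).mulVec x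
          = lam * ((fun j => μ.marg j * x j) ⬝ᵥ (fun j => μ.marg j * x j)) := by
        simp only [dotProduct, Matrix.mulVec_diagonal, Finset.mul_sum]
        exact Finset.sum_congr rfl fun j _ => by ring
      calc x ⬝ᵥ (Matrix.hadamard μ.probMatrix L).mulVec x
          = (fun j => μ.marg j * x j) ⬝ᵥ
              (Matrix.hadamard μ.Pbar L).mulVec (fun j => μ.marg j * x j) :=
            myDot_had μ L x
        _ ≤ lam * ((fun j => μ.marg j * x j) ⬝ᵥ (fun j => μ.marg j * x j)) :=
            myQuad_le_lambdaMax _ _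
        _ = x ⬝ᵥ (Matrix.diagonal (fun j => μ.marg j * (lam * μ.marg j))).mulVec x :=
            hdd.symm
  -- Part 3
  · have h : ∀ j : Fin d, lam * μ.marg j / μ.marg j = lam := fun j =>
      mul_div_cancel_right₀ lam (mySampling_marg_pos μ j).ne'
    simp only [h, ciSup_const]
  -- Part 4
  · intro v hv hps
    apply myLambdaMax_le hd
    intro u hu
    set x := fun j => u j / μ.marg j with hx
    have hxu : (fun j => μ.marg j * x j) = u := funext fun j => by
      simp only [hx]
      rw [mul_div_cancel₀ _ (mySampling_marg_pos μ j).ne']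
    have h1 : u ⬝ᵥ (Matrix.hadamard μ.Pbar L).mulVec u
        = x ⬝ᵥ (Matrix.hadamard μ.probMatrix L).mulVec x := by
      conv_lhs => rw [← hxu]
      exact (myDot_had μ L x).symm
    have h2 := (Matrix.posSemidef_iff_dotProduct_mulVec.mp hps).2 x
    rw [hst, Matrix.sub_mulVec, dotProduct_sub, sub_nonneg] at h2
    have h3 : x ⬝ᵥ (Matrix.diagonal (fun j => μ.marg j * v j)).mulVec x
        = ∑ j, (v j / μ.marg j) * (u j * u j) := by
      simp only [dotProduct, Matrix.mulVec_diagonal]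
      refine Finset.sum_congr rfl fun j _ => ?_
      have := (mySampling_marg_pos μ j).ne'
      simp only [hx]
      field_simp
    have h4 : ∑ j, (v j / μ.marg j) * (u j * u j)
        ≤ (⨆ j : Fin d, v j / μ.marg j) * ∑ j, u j * u j := by
      rw [Finset.mul_sum]
      refine Finset.sum_le_sum fun j _ => ?_
      exact mul_le_mul_of_nonneg_right
        (le_ciSup (f := fun j => v j / μ.marg j) (Set.Finite.bddAbove (Set.finite_range _)) j) (mul_self_nonneg _)
    have hu' : ∑ j, u j * u j = 1 := hu
    calc u ⬝ᵥ (Matrix.hadamard μ.Pbar L).mulVec u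
        = x ⬝ᵥ (Matrix.hadamard μ.probMatrix L).mulVec x := h1
      _ ≤ x ⬝ᵥ (Matrix.diagonal (fun j => μ.marg j * v j)).mulVec x := h2
      _ = ∑ j, (v j / μ.marg j) * (u j * u j) := h3
      _ ≤ (⨆ j : Fin d, v j / μ.marg j) * ∑ j, u j * u j := h4
      _ = ⨆ j : Fin d, v j / μ.marg j := by rw [hu', mul_one]
end
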